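/- Let p be a prime, t_1,...,t_k integers with p ∤ t_k, and C(X) = X^k - t_1 X^{k-1} - ... - t_k. If C(X) is squarefree mod p (equivalently, p does not divide the discriminant of C), then p does not divide the period c_p of the generalized Fibonacci sequence mod p. -/

import Mathlib

open Polynomial

/-- if `p ∤ t_k` and the core polynomial is squarefree mod `p`, then
`p` does not divide the period `c_p` of the generalized Fibonacci sequence mod `p`. -/
theorem not_p_dvd_period_of_squarefree
    (k : ℕ) (hk : 1 ≤ k) (t : Fin k → ℤ) (f : ℕ → ℤ)
    (h0 : ∀ j, j < k - 1 → f j = 0) (h1 : f (k - 1) = 1)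
    (hrec : ∀ n, k ≤ n → f n = ∑ j : Fin k, t j * f (n - 1 - (j : ℕ)))
    (p : ℕ) (hp : p.Prime) (hpt : ¬ (p : ℤ) ∣ t ⟨k - 1, by omega⟩)
    (hsqf : Squarefree
      (Polynomial.map (Int.castRingHom (ZMod p))
        (Polynomial.X ^ k -
          ∑ j : Fin k, Polynomial.C (t j) * Polynomial.X ^ (k - 1 - (j : ℕ))))) :
    ¬ p ∣ sInf {c : ℕ | 0 < c ∧ ∀ n, ((f (n + c) : ZMod p) = (f n : ZMod p))} := by
  haveI : Fact p.Prime := ⟨hp⟩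
  set Cq : (ZMod p)[X] :=
    X ^ k - ∑ j : Fin k, C ((t j : ZMod p)) * X ^ (k - 1 - (j : ℕ)) with hCqdef
  have hmap : Polynomial.map (Int.castRingHom (ZMod p))
      (Polynomial.X ^ k -
        ∑ j : Fin k, Polynomial.C (t j) * Polynomial.X ^ (k - 1 - (j : ℕ))) = Cq := by
    simp [hCqdef, Polynomial.map_sub, Polynomial.map_pow, Polynomial.map_sum,
      Polynomial.map_mul, Polynomial.map_C, eq_intCast]
  rw [hmap] at hsqf
  have hdegS : (∑ j : Fin k, C ((t j : ZMod p)) * X ^ (k - 1 - (j : ℕ))).degree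
      < (k : WithBot ℕ) := by
    refine lt_of_le_of_lt (degree_sum_le _ _) ?_
    rw [Finset.sup_lt_iff (by exact_mod_cast WithBot.bot_lt_coe k)]
    intro j _
    refine lt_of_le_of_lt (degree_C_mul_X_pow_le _ _) ?_
    exact_mod_cast (by omega : k - 1 - (j : ℕ) < k)
  have hmonic : Cq.Monic := monic_X_pow_sub hdegS
  have hCqne : Cq ≠ 0 := hmonic.ne_zero
  have hdegCq : Cq.degree = (k : WithBot ℕ) := by
    rw [hCqdef, degree_sub_eq_left_of_degree_lt (by rwa [degree_X_pow]), degree_X_pow]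
  -- constant coefficient
  have hcoeff0 : Cq.coeff 0 = -((t ⟨k - 1, by omega⟩ : ZMod p)) := by
    rw [hCqdef, coeff_sub, coeff_X_pow, finset_sum_coeff]
    have hterm : ∀ j : Fin k, (C ((t j : ZMod p)) * X ^ (k - 1 - (j : ℕ))).coeff 0
        = if j = ⟨k - 1, by omega⟩ then ((t j : ZMod p)) else 0 := by
      intro j
      rw [coeff_C_mul, coeff_X_pow]
      rcases eq_or_ne j ⟨k - 1, by omega⟩ with h | h
      · subst h; simp
      · have hj : (j : ℕ) < k := j.isLt
        have hne : (j : ℕ) ≠ k - 1 := fun hc => h (Fin.ext hc)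
        have : k - 1 - (j : ℕ) ≠ 0 := by omega
        simp [Ne.symm this, h]
    rw [Finset.sum_congr rfl fun j _ => hterm j, Finset.sum_ite_eq' Finset.univ _ _,
      if_neg (by omega : ¬ (0 = k)), if_pos (Finset.mem_univ _), zero_sub]
  have hne0 : Cq.coeff 0 ≠ 0 := by
    rw [hcoeff0, neg_ne_zero, Ne, ZMod.intCast_zmod_eq_zero_iff_dvd]
    exact_mod_cast hpt
  have hcop : IsCoprime (X : (ZMod p)[X]) Cq :=
    (irreducible_X).coprime_iff_not_dvd.mpr fun h => hne0 (X_dvd_iff.mp h)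
  -- the quotient ring
  haveI : Nontrivial (AdjoinRoot Cq) :=
    AdjoinRoot.nontrivial Cq (by rw [hdegCq]; exact_mod_cast (by omega : k ≠ 0))
  haveI : Module.Finite (ZMod p) (AdjoinRoot Cq) :=
    Module.Finite.of_basis (AdjoinRoot.powerBasis hCqne).basis
  haveI : Finite (AdjoinRoot Cq) := Module.finite_of_finite (ZMod p)
  obtain ⟨a, b, hab⟩ := hcop
  have hxunit : IsUnit (AdjoinRoot.root Cq) := by
    apply IsUnit.of_mul_eq_one (AdjoinRoot.mk Cq a)
    have h := congrArg (AdjoinRoot.mk Cq) hab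
    rw [map_add, map_mul, map_mul, AdjoinRoot.mk_X, AdjoinRoot.mk_self, mul_zero,
      add_zero, map_one] at h
    rw [mul_comm]; exact h
  set u : (AdjoinRoot Cq)ˣ := hxunit.unit with hu
  set m := orderOf u with hm
  have hmpos : 0 < m := orderOf_pos u
  have hxm : (AdjoinRoot.root Cq) ^ m = 1 := by
    have h := congrArg (Units.val) (pow_orderOf_eq_one u)
    rw [Units.val_pow_eq_pow_val, Units.val_one] at h
    rw [← hxunit.unit_spec, ← hu, hm]
    exact h
  have hdvd1 : Cq ∣ X ^ m - 1 := by
    rw [← AdjoinRoot.mk_eq_zero, map_sub, map_pow, AdjoinRoot.mk_X, map_one, hxm, sub_self]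
  -- the coefficient sequence
  set A : ℕ → ZMod p := fun n => ((X ^ n %ₘ Cq).coeff (k - 1)) with hA
  have hself : ∀ n < k, X ^ n %ₘ Cq = X ^ n := by
    intro n hn
    exact (modByMonic_eq_self_iff hmonic).mpr
      (by rw [degree_X_pow, hdegCq]; exact_mod_cast hn)
  have hArec : ∀ n, k ≤ n → A n = ∑ j : Fin k, ((t j : ZMod p)) * A (n - 1 - (j : ℕ)) := by
    intro n hn
    have key : X ^ n - ∑ j : Fin k, C ((t j : ZMod p)) * X ^ (n - 1 - (j : ℕ))
        = X ^ (n - k) * Cq := by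
      rw [hCqdef, mul_sub, Finset.mul_sum, ← pow_add]
      congr 1
      · congr 1; omega
      · refine Finset.sum_congr rfl fun j _ => ?_
        rw [mul_left_comm, ← pow_add]
        have hj : (j : ℕ) < k := j.isLt
        congr 2
        omega
    have hmod : X ^ n %ₘ Cq
        = (∑ j : Fin k, C ((t j : ZMod p)) * X ^ (n - 1 - (j : ℕ))) %ₘ Cq := by
      have hz : (X ^ n - ∑ j : Fin k, C ((t j : ZMod p)) * X ^ (n - 1 - (j : ℕ))) %ₘ Cq
          = 0 := by
        rw [modByMonic_eq_zero_iff_dvd hmonic, key]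
        exact dvd_mul_left Cq _
      rw [sub_modByMonic] at hz
      exact sub_eq_zero.mp hz
    have hlin : (∑ j : Fin k, C ((t j : ZMod p)) * X ^ (n - 1 - (j : ℕ))) %ₘ Cq
        = ∑ j : Fin k, ((t j : ZMod p)) • (X ^ (n - 1 - (j : ℕ)) %ₘ Cq) := by
      simp only [← smul_eq_C_mul]
      rw [← modByMonicHom_apply, map_sum]
      simp only [map_smul, modByMonicHom_apply]
    simp only [hA]
    rw [hmod, hlin, finset_sum_coeff]
    refine Finset.sum_congr rfl fun j _ => ?_
    rw [coeff_smul, smul_eq_mul]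
  have hFA : ∀ n, ((f n : ZMod p)) = A n := by
    intro n
    induction n using Nat.strong_induction_on with
    | _ n ih =>
      rcases lt_or_ge n k with hn | hn
      · simp only [hA]
        rw [hself n hn, coeff_X_pow]
        by_cases hnk : n = k - 1
        · subst hnk; rw [h1]; simp
        · rw [h0 n (by omega)]
          simp [show ¬ (k - 1 = n) from fun h => hnk h.symm]
      · rw [hrec n hn]
        push_cast
        rw [hArec n hn]
        refine Finset.sum_congr rfl fun j _ => ?_
        rw [ih (n - 1 - (j : ℕ)) (by omega)]
  have hAper : ∀ n, A (n + m) = A n := by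
    intro n
    have hdvd : Cq ∣ (X : (ZMod p)[X]) ^ (n + m) - X ^ n := by
      have h : (X : (ZMod p)[X]) ^ (n + m) - X ^ n = X ^ n * (X ^ m - 1) := by
        rw [mul_sub, mul_one, ← pow_add]
      rw [h]
      exact Dvd.dvd.mul_left hdvd1 _
    have hz : (X ^ (n + m) - X ^ n) %ₘ Cq = 0 := (modByMonic_eq_zero_iff_dvd hmonic).mpr hdvd
    rw [sub_modByMonic] at hz
    have h := sub_eq_zero.mp hz
    simp only [hA]
    rw [h]
  set S := {c : ℕ | 0 < c ∧ ∀ n, ((f (n + c) : ZMod p) = (f n : ZMod p))} with hS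
  have hmS : m ∈ S := ⟨hmpos, fun n => by rw [hFA, hFA, hAper n]⟩
  have hc0 : sInf S ∈ S := Nat.sInf_mem ⟨m, hmS⟩
  set c0 := sInf S with hc0def
  have hiter : ∀ q n, ((f (n + q * c0) : ZMod p) = (f n : ZMod p)) := by
    intro q
    induction q with
    | zero => simp
    | succ q ih =>
      intro n
      have h : n + (q + 1) * c0 = (n + q * c0) + c0 := by ring
      rw [h, hc0.2 (n + q * c0), ih n]
  have hdvdm : c0 ∣ m := by
    by_contra hnd
    have hr : m % c0 ≠ 0 := fun h => hnd (Nat.dvd_of_mod_eq_zero h)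
    have hrS : m % c0 ∈ S := by
      refine ⟨Nat.pos_of_ne_zero hr, fun n => ?_⟩
      have heq : n + m % c0 + (m / c0) * c0 = n + m := by
        have := Nat.mod_add_div' m c0
        omega
      calc ((f (n + m % c0) : ZMod p)) = ((f (n + m % c0 + (m / c0) * c0) : ZMod p)) :=
            (hiter (m / c0) (n + m % c0)).symm
        _ = ((f (n + m) : ZMod p)) := by rw [heq]
        _ = ((f n : ZMod p)) := hmS.2 n
    have hle := Nat.sInf_le hrS
    have hlt := Nat.mod_lt m hc0.1
    omega
  have hpm : ¬ p ∣ m := by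
    intro hpm
    set d := m / p with hd
    have hdp : d * p = m := Nat.div_mul_cancel hpm
    have hdpos : 0 < d := Nat.pos_of_ne_zero fun h => by
      rw [h, zero_mul] at hdp; omega
    have hdlt : d < m := by
      have h2 := hp.two_le
      have h3 : d * 2 ≤ m := by
        rw [← hdp]; exact Nat.mul_le_mul_left d h2
      omega
    have hv1 : u ^ d ≠ 1 := by
      intro h
      have hdvd := orderOf_dvd_of_pow_eq_one h
      rw [← hm] at hdvd
      exact absurd (Nat.le_of_dvd hdpos hdvd) (by omega)
    have hvp : (u ^ d) ^ p = 1 := by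
      rw [← pow_mul, hdp, hm, pow_orderOf_eq_one]
    haveI : CharP (AdjoinRoot Cq) p :=
      charP_of_injective_algebraMap (algebraMap (ZMod p) (AdjoinRoot Cq)).injective p
    set w : AdjoinRoot Cq := ((u ^ d : (AdjoinRoot Cq)ˣ) : AdjoinRoot Cq) with hw
    have hwp : w ^ p = 1 := by
      rw [hw, ← Units.val_pow_eq_pow_val, hvp, Units.val_one]
    have hwne : w ≠ 1 := fun h => hv1 (Units.ext h)
    have hnil : (w - 1) ^ p = 0 := by
      rw [sub_pow_char, hwp, one_pow, sub_self]
    obtain ⟨g, hg⟩ := AdjoinRoot.mk_surjective w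
    have hdvdg : Cq ∣ (g - 1) ^ p := by
      rw [← AdjoinRoot.mk_eq_zero, map_pow, map_sub, hg, map_one, hnil]
    have hrad : Cq ∣ g - 1 := hsqf.isRadical p (g - 1) hdvdg
    have hzero : AdjoinRoot.mk Cq (g - 1) = 0 := AdjoinRoot.mk_eq_zero.mpr hrad
    rw [map_sub, hg, map_one, sub_eq_zero] at hzero
    exact hwne hzero
  intro hpc
  exact hpm (hpc.trans hdvdm)
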